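/- Let d ≥ 2, β ∈ ℝ with |β| ≤ 1, let W = Σ_{i,j} E_{ij} ⊗ E_{ji} be the swap operator on ℂ^d ⊗ ℂ^d, and let ρ = (I + βW)/(d² + dβ) be the corresponding Werner state. Then both the one-sided and the two-sided negativity of quantumness of ρ equal Q_N^A(ρ) = Q_N^{AB}(ρ) = |β|(d−1)/(2(d+β)). -/

import Mathlib

open scoped Kronecker ComplexOrder
open Matrix

noncomputable def traceNorm {ι : Type*} [Fintype ι] [DecidableEq ι] (A : Matrix ι ι ℂ) : ℝ :=
  (((Matrix.posSemidef_conjTranspose_mul_self A).1.eigenvectorUnitary.1 *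
    Matrix.diagonal (((↑) : ℝ → ℂ) ∘ (√·) ∘ (Matrix.posSemidef_conjTranspose_mul_self A).1.eigenvalues) *
    (star (Matrix.posSemidef_conjTranspose_mul_self A).1.eigenvectorUnitary :
      Matrix ι ι ℂ)).trace).re

noncomputable def l1Norm {ι κ : Type*} [Fintype ι] [Fintype κ] (A : Matrix ι κ ℂ) : ℝ :=
  ∑ i, ∑ j, ‖A i j‖

def ptranspose {α β : Type*} (ρ : Matrix (α × β) (α × β) ℂ) : Matrix (α × β) (α × β) ℂ :=
  Matrix.of fun p q => ρ (p.1, q.2) (q.1, p.2)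

noncomputable def negativity {α β : Type*} [Fintype α] [Fintype β] [DecidableEq α] [DecidableEq β]
    (ρ : Matrix (α × β) (α × β) ℂ) : ℝ :=
  (traceNorm (ptranspose ρ) - 1) / 2

def matUnit {ι : Type*} [DecidableEq ι] (i j : ι) : Matrix ι ι ℂ :=
  Matrix.single i j 1

noncomputable def mcs {n : ℕ} (t : Fin n → Fin n → ℂ) :
    Matrix (Fin n × Fin n) (Fin n × Fin n) ℂ :=
  ∑ i, ∑ j, t i j • (matUnit i j ⊗ₖ matUnit i j)

def blockOf {m n : ℕ} (ρ : Matrix (Fin m × Fin n) (Fin m × Fin n) ℂ) (i j : Fin m) :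
    Matrix (Fin n) (Fin n) ℂ :=
  Matrix.of fun k l => ρ (i, k) (j, l)

noncomputable def conjU {m n : ℕ} (U : Matrix.unitaryGroup (Fin m) ℂ)
    (ρ : Matrix (Fin m × Fin n) (Fin m × Fin n) ℂ) : Matrix (Fin m × Fin n) (Fin m × Fin n) ℂ :=
  ((U : Matrix (Fin m) (Fin m) ℂ) ⊗ₖ (1 : Matrix (Fin n) (Fin n) ℂ))ᴴ * ρ *
    ((U : Matrix (Fin m) (Fin m) ℂ) ⊗ₖ (1 : Matrix (Fin n) (Fin n) ℂ))

noncomputable def conjUV {m n : ℕ} (U : Matrix.unitaryGroup (Fin m) ℂ)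
    (V : Matrix.unitaryGroup (Fin n) ℂ)
    (ρ : Matrix (Fin m × Fin n) (Fin m × Fin n) ℂ) : Matrix (Fin m × Fin n) (Fin m × Fin n) ℂ :=
  ((U : Matrix (Fin m) (Fin m) ℂ) ⊗ₖ (V : Matrix (Fin n) (Fin n) ℂ))ᴴ * ρ *
    ((U : Matrix (Fin m) (Fin m) ℂ) ⊗ₖ (V : Matrix (Fin n) (Fin n) ℂ))

noncomputable def QNA {m n : ℕ} (ρ : Matrix (Fin m × Fin n) (Fin m × Fin n) ℂ) : ℝ :=
  ⨅ U : Matrix.unitaryGroup (Fin m) ℂ,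
    ((∑ i, ∑ j, traceNorm (blockOf (conjU U ρ) i j)) - 1) / 2

noncomputable def QNAB {m n : ℕ} (ρ : Matrix (Fin m × Fin n) (Fin m × Fin n) ℂ) : ℝ :=
  ⨅ U : Matrix.unitaryGroup (Fin m) ℂ, ⨅ V : Matrix.unitaryGroup (Fin n) ℂ,
    (l1Norm (conjUV U V ρ) - 1) / 2

/-- The swap operator `W = Σ_{i,j} E_{ij} ⊗ E_{ji}` on `ℂ^d ⊗ ℂ^d`. -/
noncomputable def swapOp (d : ℕ) : Matrix (Fin d × Fin d) (Fin d × Fin d) ℂ :=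
  ∑ i, ∑ j, matUnit i j ⊗ₖ matUnit j i

/-- The Werner state `ρ = (I + βW)/(d² + dβ)`. -/
noncomputable def werner (d : ℕ) (β : ℝ) : Matrix (Fin d × Fin d) (Fin d × Fin d) ℂ :=
  (((d ^ 2 + d * β : ℝ)) : ℂ)⁻¹ •
    ((1 : Matrix (Fin d × Fin d) (Fin d × Fin d) ℂ) + (β : ℂ) • swapOp d)


section AuxLemmas

section MatOrd
open scoped MatrixOrder

lemma aux_traceNorm_eq {ι : Type*} [Fintype ι] [DecidableEq ι] (A B : Matrix ι ι ℂ)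
    (hB : B.PosSemidef) (h : B ^ 2 = Aᴴ * A) : traceNorm A = B.trace.re := by
  have hT : traceNorm A =
      ((Matrix.posSemidef_conjTranspose_mul_self A).1.cfc Real.sqrt).trace.re := by
    rw [IsHermitian.cfc, Unitary.conjStarAlgAut_apply]; rfl
  have hnn : 0 ≤ B ^ 2 := h ▸ (Matrix.posSemidef_conjTranspose_mul_self A).nonneg
  have e : cfc Real.sqrt (B ^ 2) = CFC.sqrt (B ^ 2) := by
    rw [CFC.sqrt_eq_real_sqrt _ hnn, cfcₙ_eq_cfc (hf0 := Real.sqrt_zero)]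
  rw [hT, ← IsHermitian.cfc_eq, ← h, e, CFC.sqrt_sq B hB.nonneg]

end MatOrd

lemma aux_psd_smul {ι : Type*} [Fintype ι] {M : Matrix ι ι ℂ} (hM : M.PosSemidef)
    {r : ℝ} (hr : 0 ≤ r) : ((r : ℂ) • M).PosSemidef := by
  exact hM.smul (by exact_mod_cast Complex.zero_le_real.2 hr)

lemma aux_vmv_conjT {ι : Type*} (y : ι → ℂ) :
    (vecMulVec y (star y))ᴴ = vecMulVec y (star y) := by
  ext i j
  simp [vecMulVec_apply, conjTranspose_apply, mul_comm]

lemma aux_vmv_conjT' {ι κ : Type*} (x : ι → ℂ) (y : κ → ℂ) :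
    (vecMulVec x (star y))ᴴ = vecMulVec y (star x) := by
  ext i j
  simp [vecMulVec_apply, conjTranspose_apply, mul_comm]

lemma aux_vmv_mul {ι : Type*} [Fintype ι] (a b c d : ι → ℂ) :
    vecMulVec a b * vecMulVec c d = (b ⬝ᵥ c) • vecMulVec a d := by
  ext i j
  simp [vecMulVec_apply, mul_apply, dotProduct, Finset.sum_mul, Finset.mul_sum]
  exact Finset.sum_congr rfl fun k _ => by ring

set_option linter.unusedSectionVars false

section proj
variable {ι : Type*} [Fintype ι] [DecidableEq ι]

lemma aux_vmv_proj (y : ι → ℂ) (hy : star y ⬝ᵥ y = 1) :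
    vecMulVec y (star y) * vecMulVec y (star y) = vecMulVec y (star y) := by
  rw [aux_vmv_mul, hy, one_smul]

lemma aux_vmv_psd (y : ι → ℂ) (hy : star y ⬝ᵥ y = 1) :
    (vecMulVec y (star y)).PosSemidef := by
  have h : vecMulVec y (star y) = (vecMulVec y (star y))ᴴ * vecMulVec y (star y) := by
    rw [aux_vmv_conjT, aux_vmv_proj y hy]
  rw [h]; exact posSemidef_conjTranspose_mul_self _

lemma aux_one_sub_vmv_psd (y : ι → ℂ) (hy : star y ⬝ᵥ y = 1) :
    ((1 : Matrix ι ι ℂ) - vecMulVec y (star y)).PosSemidef := by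
  have h : (1 : Matrix ι ι ℂ) - vecMulVec y (star y) =
      ((1 : Matrix ι ι ℂ) - vecMulVec y (star y))ᴴ *
        ((1 : Matrix ι ι ℂ) - vecMulVec y (star y)) := by
    rw [conjTranspose_sub, conjTranspose_one, aux_vmv_conjT, sub_mul, mul_sub, mul_sub,
      one_mul, mul_one, aux_vmv_proj y hy]
    rw [one_mul]; abel
  rw [h]; exact posSemidef_conjTranspose_mul_self _

lemma aux_vmv_trace (y : ι → ℂ) (hy : star y ⬝ᵥ y = 1) :
    (vecMulVec y (star y)).trace = 1 := by
  rw [← hy]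
  simp [Matrix.trace, dotProduct, vecMulVec_apply, Matrix.diag, mul_comm]

end proj

lemma aux_traceNorm_rank_one {ι : Type*} [Fintype ι] [DecidableEq ι]
    (x y : ι → ℂ) (hx : star x ⬝ᵥ x = 1) (hy : star y ⬝ᵥ y = 1) (c : ℂ) :
    traceNorm (c • vecMulVec x (star y)) = ‖ c‖ := by
  set P := vecMulVec y (star y) with hP
  have hB : (((‖ c‖ : ℝ) : ℂ) • P).PosSemidef :=
    aux_psd_smul (aux_vmv_psd y hy) (by positivity)
  rw [aux_traceNorm_eq _ _ hB ?_]
  · rw [trace_smul, aux_vmv_trace y hy]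
    simp
  · rw [conjTranspose_smul, aux_vmv_conjT', smul_mul_assoc, mul_smul_comm, aux_vmv_mul, hx,
      one_smul, pow_two, smul_mul_assoc, mul_smul_comm, aux_vmv_mul, hy, one_smul, smul_smul,
      smul_smul]
    congr 1
    rw [Complex.star_def, ← Complex.normSq_eq_conj_mul_self, ← Complex.ofReal_mul,
      ← Complex.sq_norm, pow_two]

lemma aux_traceNorm_diag_block {ι : Type*} [Fintype ι] [DecidableEq ι]
    (y : ι → ℂ) (hy : star y ⬝ᵥ y = 1) (β : ℝ) (hβ : -1 ≤ β) (N : ℝ) (hN : 0 < N) :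
    traceNorm (((N : ℂ))⁻¹ • ((1 : Matrix ι ι ℂ) + (β : ℂ) • vecMulVec y (star y)))
      = ((Fintype.card ι : ℝ) + β) / N := by
  set P := vecMulVec y (star y) with hP
  set A := ((N : ℂ))⁻¹ • ((1 : Matrix ι ι ℂ) + (β : ℂ) • P) with hA
  have hsplit : A = ((N⁻¹ : ℝ) : ℂ) • ((1 : Matrix ι ι ℂ) - P)
      + (((1 + β) / N : ℝ) : ℂ) • P := by
    rw [hA]
    push_cast
    rw [smul_sub, smul_add, smul_smul]
    rw [div_eq_mul_inv, mul_comm ((1:ℂ)+β)]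
    module
  have hpsd : A.PosSemidef := by
    rw [hsplit]
    exact (aux_psd_smul (aux_one_sub_vmv_psd y hy) (by positivity)).add
      (aux_psd_smul (aux_vmv_psd y hy) (div_nonneg (by linarith) hN.le))
  have herm : Aᴴ = A := by
    rw [hA, conjTranspose_smul, conjTranspose_add, conjTranspose_one, conjTranspose_smul,
      aux_vmv_conjT]
    norm_num
    rfl
  rw [aux_traceNorm_eq A A hpsd (by rw [pow_two, herm])]
  rw [hA, trace_smul, trace_add, trace_smul, aux_vmv_trace y hy, trace_one]
  rw [div_eq_inv_mul, ← Complex.ofReal_natCast, ← Complex.ofReal_inv,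
    smul_eq_mul, smul_eq_mul, mul_one, ← Complex.ofReal_add, ← Complex.ofReal_mul,
    Complex.ofReal_re]

lemma aux_swapOp_apply (d : ℕ) (a b c e : Fin d) :
    swapOp d (a, b) (c, e) = if a = e ∧ b = c then 1 else 0 := by
  simp only [swapOp, Matrix.sum_apply, kroneckerMap_apply, matUnit,
    Matrix.single, Matrix.of_apply]
  rw [Finset.sum_comm]
  rw [Finset.sum_eq_single b]
  · rw [Finset.sum_eq_single a]
    · by_cases h1 : a = e <;> by_cases h2 : b = c <;> simp [h1, h2, and_comm]
    · intro i _ hi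
      by_cases h2 : b = c <;> simp [hi, Ne.symm hi]
    · simp
  · intro j _ hj
    simp [hj, Ne.symm hj]
  · simp

lemma aux_conjW_apply {d : ℕ} (U V : Matrix (Fin d) (Fin d) ℂ) (i k j l : Fin d) :
    ((U ⊗ₖ V)ᴴ * swapOp d * (U ⊗ₖ V)) (i, k) (j, l)
      = (Uᴴ * V) i l * (Vᴴ * U) k j := by
  have hWX : (swapOp d * (U ⊗ₖ V)) = Matrix.of
      (fun (p : Fin d × Fin d) (q : Fin d × Fin d) => U p.2 q.1 * V p.1 q.2) := by
    ext ⟨a, b⟩ ⟨j', l'⟩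
    rw [mul_apply]
    rw [Fintype.sum_prod_type]
    simp [aux_swapOp_apply, ite_and, Finset.sum_ite_eq, Finset.sum_ite_eq']
  rw [Matrix.mul_assoc, hWX, mul_apply, Fintype.sum_prod_type]
  simp only [conjTranspose_apply, kroneckerMap_apply, Matrix.of_apply, star_mul']
  rw [mul_apply, mul_apply, Finset.sum_mul_sum]
  apply Finset.sum_congr rfl
  intro a _
  apply Finset.sum_congr rfl
  intro b _
  simp [conjTranspose_apply]
  ring

lemma aux_kron_conjT {m n : ℕ} (U : Matrix (Fin m) (Fin m) ℂ) (V : Matrix (Fin n) (Fin n) ℂ) :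
    (U ⊗ₖ V)ᴴ = Uᴴ ⊗ₖ Vᴴ := by
  ext ⟨a, b⟩ ⟨c, e⟩
  simp only [conjTranspose_apply, kroneckerMap_apply, star_mul']

lemma aux_conjUV_werner {d : ℕ} (β : ℝ) (U V : Matrix.unitaryGroup (Fin d) ℂ) (i k j l : Fin d) :
    conjUV U V (werner d β) (i, k) (j, l) =
      (((d ^ 2 + d * β : ℝ)) : ℂ)⁻¹ *
        ((if i = j ∧ k = l then 1 else 0) +
          (β : ℂ) * (((U : Matrix (Fin d) (Fin d) ℂ)ᴴ * (V : Matrix (Fin d) (Fin d) ℂ)) i l *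
            (starRingEnd ℂ) (((U : Matrix (Fin d) (Fin d) ℂ)ᴴ *
              (V : Matrix (Fin d) (Fin d) ℂ)) j k))) := by
  set X := (U : Matrix (Fin d) (Fin d) ℂ) ⊗ₖ (V : Matrix (Fin d) (Fin d) ℂ) with hX
  have hXX : Xᴴ * X = 1 := by
    rw [hX, aux_kron_conjT, ← Matrix.mul_kronecker_mul, ← Matrix.star_eq_conjTranspose,
      ← Matrix.star_eq_conjTranspose, UnitaryGroup.star_mul_self, UnitaryGroup.star_mul_self,
      Matrix.one_kronecker_one]
  have hexp : conjUV U V (werner d β) =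
      (((d ^ 2 + d * β : ℝ)) : ℂ)⁻¹ • ((1 : Matrix (Fin d × Fin d) (Fin d × Fin d) ℂ)
        + (β : ℂ) • (Xᴴ * swapOp d * X)) := by
    unfold conjUV werner
    rw [← hX]
    rw [Matrix.mul_smul, Matrix.smul_mul, Matrix.mul_add, Matrix.add_mul, Matrix.mul_one,
      hXX, Matrix.mul_smul, Matrix.smul_mul, Matrix.mul_assoc, ← Matrix.mul_assoc (Xᴴ)]
  rw [hexp]
  have h2 : ((U : Matrix (Fin d) (Fin d) ℂ)ᴴ * (V : Matrix (Fin d) (Fin d) ℂ))ᴴ =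
      (V : Matrix (Fin d) (Fin d) ℂ)ᴴ * (U : Matrix (Fin d) (Fin d) ℂ) := by
    rw [conjTranspose_mul, conjTranspose_conjTranspose]
  have h3 : ((V : Matrix (Fin d) (Fin d) ℂ)ᴴ * (U : Matrix (Fin d) (Fin d) ℂ)) k j =
      (starRingEnd ℂ) (((U : Matrix (Fin d) (Fin d) ℂ)ᴴ * (V : Matrix (Fin d) (Fin d) ℂ)) j k) := by
    rw [← h2, conjTranspose_apply, Complex.star_def]
  rw [hX]
  simp only [Matrix.smul_apply, Matrix.add_apply, Matrix.smul_apply, aux_conjW_apply, h3,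
    smul_eq_mul, Matrix.one_apply, Prod.mk.injEq]

lemma aux_S_formula {d : ℕ} (A : Matrix (Fin d) (Fin d) ℂ)
    (hA : ∀ i, ∑ l, ‖ (A i l)‖ ^ 2 = 1) (β : ℝ) (hβ : -1 ≤ β) :
    ∑ p : Fin d × Fin d, ∑ q : Fin d × Fin d,
      ‖ ((if p = q then 1 else 0) +
        (β : ℂ) * (A p.1 q.2 * (starRingEnd ℂ) (A q.1 p.2)))‖
    = (d : ℝ) ^ 2 + β * d + |β| * ((∑ i, ∑ l, ‖ (A i l)‖) ^ 2 - d) := by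
  have habs : ∀ i l, ‖ (A i l)‖ ≤ 1 := by
    intro i l
    have h1 : ‖ (A i l)‖ ^ 2 ≤ 1 := by
      rw [← hA i]
      exact Finset.single_le_sum (f := fun x => ‖ (A i x)‖ ^ 2)
        (fun x _ => by positivity) (Finset.mem_univ l)
    nlinarith [norm_nonneg (A i l)]
  have hpoint : ∀ p q : Fin d × Fin d,
      ‖ ((if p = q then 1 else 0) +
        (β : ℂ) * (A p.1 q.2 * (starRingEnd ℂ) (A q.1 p.2)))‖
      = |β| * (‖ (A p.1 q.2)‖ * ‖ (A q.1 p.2)‖) +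
        (if p = q then 1 + (β - |β|) * ‖ (A p.1 p.2)‖ ^ 2 else 0) := by
    intro p q
    by_cases h : p = q
    · subst h
      simp only [if_pos rfl, if_true, eq_self_iff_true, ite_true]
      rw [Complex.mul_conj]
      have hcast : (1 : ℂ) + (β : ℂ) * ((Complex.normSq (A p.1 p.2) : ℝ) : ℂ) =
          (((1 + β * Complex.normSq (A p.1 p.2) : ℝ)) : ℂ) := by push_cast; ring
      rw [hcast, Complex.norm_real, Real.norm_eq_abs]
      have hsq : Complex.normSq (A p.1 p.2) = ‖ (A p.1 p.2)‖ ^ 2 :=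
        Complex.normSq_eq_norm_sq _
      have hnn : 0 ≤ 1 + β * Complex.normSq (A p.1 p.2) := by
        nlinarith [Complex.normSq_nonneg (A p.1 p.2), habs p.1 p.2,
          norm_nonneg (A p.1 p.2)]
      rw [abs_of_nonneg hnn, hsq]
      ring
    · simp only [if_neg h]
      rw [zero_add, norm_mul, norm_mul, Complex.norm_real, Real.norm_eq_abs, Complex.norm_conj]
      ring
  simp only [hpoint]
  rw [Finset.sum_congr rfl (fun p _ => Finset.sum_add_distrib), Finset.sum_add_distrib]
  have h2 : ∑ p : Fin d × Fin d, ∑ q : Fin d × Fin d,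
      (if p = q then 1 + (β - |β|) * ‖ (A p.1 p.2)‖ ^ 2 else 0)
      = (d : ℝ) ^ 2 + (β - |β|) * d := by
    have h3 : ∀ p : Fin d × Fin d, ∑ q : Fin d × Fin d,
        (if p = q then 1 + (β - |β|) * ‖ (A p.1 p.2)‖ ^ 2 else 0)
        = 1 + (β - |β|) * ‖ (A p.1 p.2)‖ ^ 2 := by
      intro p
      rw [Finset.sum_ite_eq]
      simp
    rw [Finset.sum_congr rfl (fun p _ => h3 p), Fintype.sum_prod_type]
    have h4 : ∀ i : Fin d, ∑ k : Fin d, (1 + (β - |β|) * ‖ (A i k)‖ ^ 2)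
        = (d : ℝ) + (β - |β|) := by
      intro i
      rw [Finset.sum_add_distrib, ← Finset.mul_sum, hA i]
      simp
    rw [Finset.sum_congr rfl (fun i _ => h4 i)]
    simp [Finset.sum_add_distrib]
    ring
  have h1 : ∑ p : Fin d × Fin d, ∑ q : Fin d × Fin d,
      (|β| * (‖ (A p.1 q.2)‖ * ‖ (A q.1 p.2)‖))
      = |β| * (∑ i, ∑ l, ‖ (A i l)‖) ^ 2 := by
    simp only [← Finset.mul_sum]
    congr 1
    rw [pow_two]
    rw [Fintype.sum_prod_type]
    have h5 : ∀ i k : Fin d, ∑ q : Fin d × Fin d,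
        ‖ (A i q.2)‖ * ‖ (A q.1 k)‖
        = (∑ l, ‖ (A i l)‖) * (∑ j, ‖ (A j k)‖) := by
      intro i k
      rw [Fintype.sum_prod_type, Finset.sum_comm, Finset.sum_mul_sum]
    calc ∑ i, ∑ k, ∑ q : Fin d × Fin d, ‖ (A i q.2)‖ * ‖ (A q.1 k)‖
        = ∑ i, ∑ k, (∑ l, ‖ (A i l)‖) * (∑ j, ‖ (A j k)‖) := by
          exact Finset.sum_congr rfl fun i _ => Finset.sum_congr rfl fun k _ => h5 i k
      _ = (∑ i, ∑ l, ‖ (A i l)‖) * (∑ k, ∑ j, ‖ (A j k)‖) := by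
          rw [← Finset.sum_mul_sum]
      _ = (∑ i, ∑ l, ‖ (A i l)‖) * (∑ i, ∑ l, ‖ (A i l)‖) := by
          rw [Finset.sum_comm (γ := Fin d)]
  rw [h1, h2]
  ring

lemma aux_row_norm {d : ℕ} (A : Matrix (Fin d) (Fin d) ℂ) (hAA : A * Aᴴ = 1) (i : Fin d) :
    ∑ l, ‖ (A i l)‖ ^ 2 = 1 := by
  have h := congrArg (fun M : Matrix (Fin d) (Fin d) ℂ => (M i i).re) hAA
  simp only [mul_apply, conjTranspose_apply, Matrix.one_apply_eq] at h
  rw [Complex.one_re] at h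
  rw [← h, Complex.re_sum]
  apply Finset.sum_congr rfl
  intro l _
  rw [Complex.star_def, Complex.mul_conj]
  rw [Complex.normSq_eq_norm_sq]
  norm_cast

lemma aux_sum_abs_ge {d : ℕ} (A : Matrix (Fin d) (Fin d) ℂ)
    (hA : ∀ i, ∑ l, ‖ (A i l)‖ ^ 2 = 1) :
    (d : ℝ) ≤ ∑ i, ∑ l, ‖ (A i l)‖ := by
  have hrow : ∀ i : Fin d, (1 : ℝ) ≤ ∑ l, ‖ (A i l)‖ := by
    intro i
    have h1 : ∑ l, ‖ (A i l)‖ ^ 2 ≤ (∑ l, ‖ (A i l)‖) ^ 2 := by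
      rw [pow_two, Finset.sum_mul]
      apply Finset.sum_le_sum
      intro l _
      rw [pow_two]
      apply mul_le_mul_of_nonneg_left _ (norm_nonneg _)
      exact Finset.single_le_sum (f := fun x => ‖ (A i x)‖)
        (fun x _ => norm_nonneg _) (Finset.mem_univ l)
    rw [hA i] at h1
    nlinarith [Finset.sum_nonneg (fun l (_ : l ∈ Finset.univ) => norm_nonneg (A i l))]
  calc (d : ℝ) = ∑ _i : Fin d, (1 : ℝ) := by simp
    _ ≤ _ := Finset.sum_le_sum fun i _ => hrow i

end AuxLemmas

/-- the one-sided and two-sided negativity of quantumness of the Werner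
state both equal `|β|(d−1)/(2(d+β))`. -/
theorem stmt_14 (d : ℕ) (hd : 2 ≤ d) (β : ℝ) (hβ : |β| ≤ 1) :
    QNA (werner d β) = |β| * ((d : ℝ) - 1) / (2 * ((d : ℝ) + β)) ∧
    QNAB (werner d β) = |β| * ((d : ℝ) - 1) / (2 * ((d : ℝ) + β)) := by
  have hβ1 : -1 ≤ β := (abs_le.mp hβ).1
  have hd2 : (2 : ℝ) ≤ (d : ℝ) := by exact_mod_cast hd
  have hdb : 0 < (d : ℝ) + β := by linarith
  have hdpos : 0 < (d : ℝ) := by linarith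
  set N : ℝ := (d : ℝ) ^ 2 + (d : ℝ) * β with hNdef
  have hN : 0 < N := by nlinarith
  have hNfac : N = (d : ℝ) * ((d : ℝ) + β) := by ring
  set T : ℝ := |β| * ((d : ℝ) - 1) / (2 * ((d : ℝ) + β)) with hT
  have hcol : ∀ (U : Matrix.unitaryGroup (Fin d) ℂ) (i : Fin d),
      star (fun k => (U : Matrix (Fin d) (Fin d) ℂ) k i) ⬝ᵥ
        (fun k => (U : Matrix (Fin d) (Fin d) ℂ) k i) = 1 := by
    intro U i
    have h := congrArg (fun M : Matrix (Fin d) (Fin d) ℂ => M i i)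
      (UnitaryGroup.star_mul_self U)
    simpa [mul_apply, dotProduct, Matrix.star_apply, Matrix.one_apply] using h
  -- QNA part
  have hblock : ∀ (U : Matrix.unitaryGroup (Fin d) ℂ) (i j : Fin d),
      traceNorm (blockOf (conjU U (werner d β)) i j)
      = if i = j then ((d : ℝ) + β) / N else |β| / N := by
    intro U i j
    have hc : conjU U (werner d β) = conjUV U 1 (werner d β) := rfl
    by_cases hij : i = j
    · subst hij
      have hb : blockOf (conjU U (werner d β)) i i
          = ((N : ℂ))⁻¹ • ((1 : Matrix (Fin d) (Fin d) ℂ)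
            + (β : ℂ) • vecMulVec (fun k => (U : Matrix (Fin d) (Fin d) ℂ) k i)
              (star (fun k => (U : Matrix (Fin d) (Fin d) ℂ) k i))) := by
        ext k l
        show conjU U (werner d β) (i, k) (i, l) = _
        rw [hc, aux_conjUV_werner]
        simp only [Matrix.smul_apply, Matrix.add_apply, Matrix.one_apply, vecMulVec_apply,
          Pi.star_apply, UnitaryGroup.one_val, Matrix.mul_one, conjTranspose_apply,
          Complex.star_def, Complex.conj_conj, smul_eq_mul, eq_self_iff_true, true_and]
        rw [← hNdef]
        ring_nf
      rw [hb, aux_traceNorm_diag_block _ (hcol U i) β hβ1 N hN]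
      simp
    · have hb : blockOf (conjU U (werner d β)) i j
          = (((N : ℂ))⁻¹ * (β : ℂ)) • vecMulVec (fun k => (U : Matrix (Fin d) (Fin d) ℂ) k j)
              (star (fun k => (U : Matrix (Fin d) (Fin d) ℂ) k i)) := by
        ext k l
        show conjU U (werner d β) (i, k) (j, l) = _
        rw [hc, aux_conjUV_werner]
        simp only [Matrix.smul_apply, vecMulVec_apply, Pi.star_apply,
          UnitaryGroup.one_val, Matrix.mul_one, conjTranspose_apply,
          Complex.star_def, Complex.conj_conj, smul_eq_mul, hij, false_and, if_false]
        rw [← hNdef]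
        ring_nf
      rw [hb, aux_traceNorm_rank_one _ _ (hcol U j) (hcol U i)]
      rw [if_neg hij, norm_mul, norm_inv, Complex.norm_real, Complex.norm_real,
        Real.norm_eq_abs, Real.norm_eq_abs, abs_of_pos hN, div_eq_inv_mul]
  have hsum : ∀ U : Matrix.unitaryGroup (Fin d) ℂ,
      (∑ i, ∑ j, traceNorm (blockOf (conjU U (werner d β)) i j))
      = ((d : ℝ) * ((d : ℝ) + β) + ((d : ℝ) ^ 2 - d) * |β|) / N := by
    intro U
    simp only [hblock U]
    have hrow : ∀ i : Fin d, (∑ j, if i = j then ((d : ℝ) + β) / N else |β| / N)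
        = (((d : ℝ) + β) / N - |β| / N) + (d : ℝ) * (|β| / N) := by
      intro i
      have h0 : ∀ j : Fin d, (if i = j then ((d : ℝ) + β) / N else |β| / N)
          = (if j = i then ((d : ℝ) + β) / N - |β| / N else 0) + |β| / N := by
        intro j
        by_cases h : i = j
        · subst h; simp
        · simp [h, Ne.symm h]
      rw [Finset.sum_congr rfl (fun j _ => h0 j), Finset.sum_add_distrib,
        Finset.sum_ite_eq' Finset.univ i, if_pos (Finset.mem_univ i),
        Finset.sum_const, Finset.card_univ, Fintype.card_fin, nsmul_eq_mul]
    rw [Finset.sum_congr rfl (fun i _ => hrow i), Finset.sum_const, Finset.card_univ,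
      Fintype.card_fin, nsmul_eq_mul]
    field_simp
    ring
  have hQNA : QNA (werner d β) = T := by
    have hval : ∀ U : Matrix.unitaryGroup (Fin d) ℂ,
        ((∑ i, ∑ j, traceNorm (blockOf (conjU U (werner d β)) i j)) - 1) / 2 = T := by
      intro U
      rw [hsum U, hT, hNfac]
      field_simp
      ring
    haveI : Nonempty (Matrix.unitaryGroup (Fin d) ℂ) := ⟨1⟩
    unfold QNA
    simp only [hval]
    exact ciInf_const
  -- QNAB part
  have hAA : ∀ (U V : Matrix.unitaryGroup (Fin d) ℂ),
      ((U : Matrix (Fin d) (Fin d) ℂ)ᴴ * (V : Matrix (Fin d) (Fin d) ℂ)) *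
        ((U : Matrix (Fin d) (Fin d) ℂ)ᴴ * (V : Matrix (Fin d) (Fin d) ℂ))ᴴ = 1 := by
    intro U V
    have hV : (V : Matrix (Fin d) (Fin d) ℂ) * (V : Matrix (Fin d) (Fin d) ℂ)ᴴ = 1 := by
      rw [← Matrix.star_eq_conjTranspose]
      exact mem_unitaryGroup_iff.mp V.2
    rw [conjTranspose_mul, conjTranspose_conjTranspose, Matrix.mul_assoc,
      ← Matrix.mul_assoc (V : Matrix (Fin d) (Fin d) ℂ), hV, Matrix.one_mul,
      ← Matrix.star_eq_conjTranspose, UnitaryGroup.star_mul_self]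
  have hArow : ∀ (U V : Matrix.unitaryGroup (Fin d) ℂ) (i : Fin d),
      ∑ l, ‖ ((((U : Matrix (Fin d) (Fin d) ℂ)ᴴ *
        (V : Matrix (Fin d) (Fin d) ℂ))) i l)‖ ^ 2 = 1 :=
    fun U V => aux_row_norm _ (hAA U V)
  have hl1 : ∀ (U V : Matrix.unitaryGroup (Fin d) ℂ),
      l1Norm (conjUV U V (werner d β))
      = ((d : ℝ) ^ 2 + β * d + |β| * ((∑ i, ∑ l, ‖
          ((((U : Matrix (Fin d) (Fin d) ℂ)ᴴ * (V : Matrix (Fin d) (Fin d) ℂ))) i l)‖) ^ 2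
          - d)) / N := by
    intro U V
    unfold l1Norm
    have hent : ∀ p q : Fin d × Fin d,
        ‖ (conjUV U V (werner d β) p q)‖
        = N⁻¹ * ‖ ((if p = q then 1 else 0) +
            (β : ℂ) * ((((U : Matrix (Fin d) (Fin d) ℂ)ᴴ *
              (V : Matrix (Fin d) (Fin d) ℂ))) p.1 q.2 *
              (starRingEnd ℂ) ((((U : Matrix (Fin d) (Fin d) ℂ)ᴴ *
                (V : Matrix (Fin d) (Fin d) ℂ))) q.1 p.2)))‖ := by
      intro p q
      have := aux_conjUV_werner β U V p.1 p.2 q.1 q.2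
      rw [Prod.mk.eta, Prod.mk.eta] at this
      rw [this, norm_mul, norm_inv, Complex.norm_real, Real.norm_eq_abs, abs_of_pos hN]
      congr 2
      simp [Prod.ext_iff]
    simp only [hent]
    simp only [← Finset.mul_sum]
    rw [aux_S_formula _ (hArow U V) β hβ1, div_eq_inv_mul]
  have hbound : ∀ (U V : Matrix.unitaryGroup (Fin d) ℂ),
      T ≤ (l1Norm (conjUV U V (werner d β)) - 1) / 2 := by
    intro U V
    rw [hl1 U V]
    set s : ℝ := ∑ i, ∑ l, ‖
      ((((U : Matrix (Fin d) (Fin d) ℂ)ᴴ * (V : Matrix (Fin d) (Fin d) ℂ))) i l)‖ with hs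
    have hsd : (d : ℝ) ≤ s := aux_sum_abs_ge _ (hArow U V)
    have hstep : ((d : ℝ) ^ 2 + β * d + |β| * (s ^ 2 - d)) / N - 1
        = |β| * (s ^ 2 - d) / N := by
      rw [hNdef]
      field_simp
      ring
    rw [hstep, hT]
    rw [show |β| * ((d : ℝ) - 1) / (2 * ((d : ℝ) + β))
        = |β| * ((d : ℝ) ^ 2 - d) / N / 2 from by rw [hNfac]; field_simp]
    have h1 : |β| * ((d : ℝ) ^ 2 - d) ≤ |β| * (s ^ 2 - d) := by
      apply mul_le_mul_of_nonneg_left _ (abs_nonneg β)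
      nlinarith
    gcongr
  have hs11 : (∑ i, ∑ l, ‖
      (((((1 : Matrix.unitaryGroup (Fin d) ℂ) : Matrix (Fin d) (Fin d) ℂ)ᴴ *
        ((1 : Matrix.unitaryGroup (Fin d) ℂ) : Matrix (Fin d) (Fin d) ℂ))) i l)‖) = d := by
    simp only [UnitaryGroup.one_val, conjTranspose_one, Matrix.one_mul, Matrix.one_apply]
    simp [apply_ite (fun z : ℂ => ‖z‖)]
  have heq11 : (l1Norm (conjUV (1 : Matrix.unitaryGroup (Fin d) ℂ)
      (1 : Matrix.unitaryGroup (Fin d) ℂ) (werner d β)) - 1) / 2 = T := by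
    rw [hl1 1 1, hs11, hT, hNfac]
    field_simp
    ring
  have hQNAB : QNAB (werner d β) = T := by
    haveI : Nonempty (Matrix.unitaryGroup (Fin d) ℂ) := ⟨1⟩
    apply le_antisymm
    · unfold QNAB
      refine le_trans (ciInf_le ?_ 1) ?_
      · refine ⟨T, ?_⟩
        rintro x ⟨U, rfl⟩
        exact le_ciInf (hbound U)
      · refine le_trans (ciInf_le ?_ 1) (le_of_eq heq11)
        refine ⟨T, ?_⟩
        rintro x ⟨V, rfl⟩
        exact hbound 1 V
    · exact le_ciInf fun U => le_ciInf fun V => hbound U V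
  exact ⟨hQNA, hQNAB⟩
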